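/- Let H be a separable complex Hilbert space, let p ≥ 1, let x : Fin p × ℤ → H be any family of vectors, and let M be a p×p complex matrix with det M ≠ 0. Define z_{(j,n)} = ∑_{k=0}^{p−1} M_{j,k} x_{(k,n)}. If z is a Riesz basis for H, then x is a Riesz basis for H. -/

import Mathlib

noncomputable section
open scoped Classical

local notation "⟪" f ", " g "⟫" => @inner ℂ _ _ g f

/-- A family `x : ι → H` is a Riesz basis for `H` if it is the image of a Hilbert
(orthonormal) basis of `H` under a continuous linear equivalence of `H`. -/
def IsRieszBasis {H : Type*} [NormedAddCommGroup H] [InnerProductSpace ℂ H]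
    {ι : Type*} (x : ι → H) : Prop :=
  ∃ (e : HilbertBasis ι ℂ H) (T : H ≃L[ℂ] H), ∀ i, x i = T (e i)

/-- Families `x, y : ι → H` form a pair of dual Riesz bases: both are Riesz bases,
they are biorthogonal, and `∑ᵢ ⟨f, yᵢ⟩ xᵢ = f` for every `f` (inner product linear in
the first argument, conjugate-linear in the second). -/
def IsDualRieszBasisPair {H : Type*} [NormedAddCommGroup H] [InnerProductSpace ℂ H]
    {ι : Type*} (x y : ι → H) : Prop :=
  IsRieszBasis x ∧ IsRieszBasis y ∧
    (∀ i j, ⟪x i, y j⟫ = if i = j then (1 : ℂ) else 0) ∧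
    ∀ f : H, HasSum (fun i => ⟪f, y i⟫ • x i) f


section RieszAuxSection


namespace RieszAux

variable {q : ℕ}

lemma norm_sq_eq (f : lp (fun _ : Fin q × ℤ => ℂ) 2) : ‖f‖^2 = ∑' i, ‖f i‖^2 := by
  have h := lp.norm_rpow_eq_tsum (p := 2) (by norm_num) f
  rw [show ((2:ENNReal).toReal) = ((2:ℕ):ℝ) by norm_num] at h
  simpa [Real.rpow_natCast] using h

lemma summable_sq (f : lp (fun _ : Fin q × ℤ => ℂ) 2) :
    Summable (fun i : Fin q × ℤ => ‖f i‖^2) := by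
  have h := (lp.memℓp f).summable (p := 2) (by norm_num)
  rw [show ((2:ENNReal).toReal) = ((2:ℕ):ℝ) by norm_num] at h
  simpa [Real.rpow_natCast] using h

lemma summable_row (f : lp (fun _ : Fin q × ℤ => ℂ) 2) (k : Fin q) :
    Summable (fun n : ℤ => ‖f (k, n)‖^2) := by
  have : Function.Injective (fun n : ℤ => ((k, n) : Fin q × ℤ)) := by
    intro a b h; simpa using congrArg Prod.snd h
  exact (summable_sq f).comp_injective this

lemma tsum_row_le (f : lp (fun _ : Fin q × ℤ => ℂ) 2) (k : Fin q) :
    (∑' n : ℤ, ‖f (k, n)‖^2) ≤ ‖f‖^2 := by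
  rw [norm_sq_eq]
  exact Summable.tsum_le_tsum_of_inj (fun n : ℤ => ((k, n) : Fin q × ℤ))
    (fun a b h => by simpa using congrArg Prod.snd h)
    (fun c _ => sq_nonneg _) (fun n => le_rfl) (summable_row f k) (summable_sq f)

/-- The underlying function of the block multiplier operator. -/
def Bfun (R : Matrix (Fin q) (Fin q) ℂ) (c : lp (fun _ : Fin q × ℤ => ℂ) 2) :
    (Fin q × ℤ) → ℂ :=
  fun i => ∑ k, R i.1 k * c (k, i.2)

/-- The constant controlling the norm. -/
def Cmat (R : Matrix (Fin q) (Fin q) ℂ) : ℝ := ∑ j, ∑ k, ‖R j k‖^2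

lemma Cmat_nonneg (R : Matrix (Fin q) (Fin q) ℂ) : 0 ≤ Cmat R :=
  Finset.sum_nonneg fun _ _ => Finset.sum_nonneg fun _ _ => sq_nonneg _

lemma Bfun_pointwise (R : Matrix (Fin q) (Fin q) ℂ) (c : lp (fun _ : Fin q × ℤ => ℂ) 2)
    (i : Fin q × ℤ) :
    ‖Bfun R c i‖^2 ≤ Cmat R * ∑ k, ‖c (k, i.2)‖^2 := by
  have h1 : ‖Bfun R c i‖ ≤ ∑ k, ‖R i.1 k‖ * ‖c (k, i.2)‖ := by
    refine (norm_sum_le _ _).trans ?_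
    exact Finset.sum_le_sum fun k _ => (norm_mul_le _ _)
  have h2 : ‖Bfun R c i‖^2 ≤ (∑ k, ‖R i.1 k‖ * ‖c (k, i.2)‖)^2 := by
    apply pow_le_pow_left₀ (norm_nonneg _) h1
  refine h2.trans ?_
  refine (Finset.sum_mul_sq_le_sq_mul_sq _ _ _).trans ?_
  refine mul_le_mul_of_nonneg_right ?_ (Finset.sum_nonneg fun _ _ => sq_nonneg _)
  exact Finset.single_le_sum (f := fun j => ∑ k, ‖R j k‖^2)
    (fun _ _ => Finset.sum_nonneg fun _ _ => sq_nonneg _) (Finset.mem_univ i.1)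

lemma summable_dom (R : Matrix (Fin q) (Fin q) ℂ) (c : lp (fun _ : Fin q × ℤ => ℂ) 2) :
    Summable (fun i : Fin q × ℤ => Cmat R * ∑ k, ‖c (k, i.2)‖^2) := by
  apply Summable.mul_left
  have : ∀ k : Fin q, Summable (fun i : Fin q × ℤ => ‖c (k, i.2)‖^2) := by
    intro k
    have h := Summable.mul_of_nonneg (f := fun _ : Fin q => (1:ℝ))
      (g := fun n : ℤ => ‖c (k, n)‖^2) (summable_of_finite_support (Set.toFinite _))
      (summable_row c k) (fun _ => zero_le_one) (fun _ => sq_nonneg _)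
    simpa using h
  exact summable_sum fun k _ => this k

end RieszAux

namespace RieszAux

lemma Bfun_memℓp (R : Matrix (Fin q) (Fin q) ℂ) (c : lp (fun _ : Fin q × ℤ => ℂ) 2) :
    Memℓp (Bfun R c) 2 := by
  apply memℓp_gen
  rw [show ((2:ENNReal).toReal) = ((2:ℕ):ℝ) by norm_num]
  simp only [Real.rpow_natCast]
  exact (summable_dom R c).of_nonneg_of_le (fun i => sq_nonneg _)
    (fun i => Bfun_pointwise R c i)

lemma Bfun_tsum_le (R : Matrix (Fin q) (Fin q) ℂ) (c : lp (fun _ : Fin q × ℤ => ℂ) 2) :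
    (∑' i : Fin q × ℤ, ‖Bfun R c i‖^2) ≤ Cmat R * (q:ℝ)^2 * ‖c‖^2 := by
  have hs : Summable (fun i : Fin q × ℤ => ‖Bfun R c i‖ ^ 2) :=
    (summable_dom R c).of_nonneg_of_le (fun i => sq_nonneg _) (fun i => Bfun_pointwise R c i)
  have h1 : (∑' i : Fin q × ℤ, ‖Bfun R c i‖^2)
      ≤ ∑' i : Fin q × ℤ, Cmat R * ∑ k, ‖c (k, i.2)‖^2 :=
    Summable.tsum_le_tsum (fun i => Bfun_pointwise R c i) hs (summable_dom R c)
  refine h1.trans ?_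
  have hrow : ∀ k : Fin q, Summable (fun i : Fin q × ℤ => ‖c (k, i.2)‖^2) := by
    intro k
    have h := Summable.mul_of_nonneg (f := fun _ : Fin q => (1:ℝ))
      (g := fun n : ℤ => ‖c (k, n)‖^2) (summable_of_finite_support (Set.toFinite _))
      (summable_row c k) (fun _ => zero_le_one) (fun _ => sq_nonneg _)
    simpa using h
  rw [tsum_mul_left]
  rw [Summable.tsum_finsetSum (fun k _ => hrow k)]
  have key : ∀ k : Fin q, (∑' i : Fin q × ℤ, ‖c (k, i.2)‖^2) ≤ (q:ℝ) * ‖c‖^2 := by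
    intro k
    rw [Summable.tsum_prod' (hrow k) (fun _ => summable_row c k)]
    simp only [tsum_fintype]
    rw [Finset.sum_const, Finset.card_univ, Fintype.card_fin, nsmul_eq_mul]
    exact mul_le_mul_of_nonneg_left (tsum_row_le c k) (Nat.cast_nonneg _)
  calc Cmat R * ∑ k : Fin q, (∑' i : Fin q × ℤ, ‖c (k, i.2)‖^2)
      ≤ Cmat R * ∑ _k : Fin q, (q:ℝ) * ‖c‖^2 := by
        refine mul_le_mul_of_nonneg_left ?_ (Cmat_nonneg R)
        exact Finset.sum_le_sum fun k _ => key k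
    _ = Cmat R * (q:ℝ)^2 * ‖c‖^2 := by
        rw [Finset.sum_const, Finset.card_univ, Fintype.card_fin, nsmul_eq_mul]; ring

lemma Bfun_norm_le (R : Matrix (Fin q) (Fin q) ℂ)
    (c : lp (fun _ : Fin q × ℤ => ℂ) 2) :
    ‖(⟨Bfun R c, Bfun_memℓp R c⟩ : lp (fun _ : Fin q × ℤ => ℂ) 2)‖
      ≤ Real.sqrt (Cmat R * (q:ℝ)^2) * ‖c‖ := by
  set b : lp (fun _ : Fin q × ℤ => ℂ) 2 := ⟨Bfun R c, Bfun_memℓp R c⟩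
  have hb : ‖b‖^2 = ∑' i : Fin q × ℤ, ‖Bfun R c i‖^2 := norm_sq_eq b
  have h2 : ‖b‖^2 ≤ (Real.sqrt (Cmat R * (q:ℝ)^2) * ‖c‖)^2 := by
    rw [hb, mul_pow, Real.sq_sqrt (mul_nonneg (Cmat_nonneg R) (sq_nonneg _))]
    exact Bfun_tsum_le R c
  have h3 := Real.sqrt_le_sqrt h2
  rwa [Real.sqrt_sq (norm_nonneg _), Real.sqrt_sq
    (mul_nonneg (Real.sqrt_nonneg _) (norm_nonneg _))] at h3

end RieszAux

namespace RieszAux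

/-- The block multiplier continuous linear map on `ℓ²(Fin q × ℤ)`. -/
def Bclm (R : Matrix (Fin q) (Fin q) ℂ) :
    lp (fun _ : Fin q × ℤ => ℂ) 2 →L[ℂ] lp (fun _ : Fin q × ℤ => ℂ) 2 :=
  LinearMap.mkContinuous
    { toFun := fun c => ⟨Bfun R c, Bfun_memℓp R c⟩
      map_add' := by
        intro c d
        apply lp.ext
        funext i
        simp only [Bfun, lp.coeFn_add, Pi.add_apply]
        rw [← Finset.sum_add_distrib]
        exact Finset.sum_congr rfl fun k _ => by ring
      map_smul' := by
        intro a c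
        apply lp.ext
        funext i
        simp only [Bfun, lp.coeFn_smul, Pi.smul_apply, RingHom.id_apply, smul_eq_mul,
          Finset.mul_sum]
        exact Finset.sum_congr rfl fun k _ => by ring }
    (Real.sqrt (Cmat R * (q:ℝ)^2))
    (fun c => Bfun_norm_le R c)

@[simp] lemma Bclm_apply (R : Matrix (Fin q) (Fin q) ℂ)
    (c : lp (fun _ : Fin q × ℤ => ℂ) 2) (i : Fin q × ℤ) :
    (Bclm R c : (Fin q × ℤ) → ℂ) i = ∑ k, R i.1 k * c (k, i.2) := rfl

lemma Bclm_comp (R S : Matrix (Fin q) (Fin q) ℂ) (c : lp (fun _ : Fin q × ℤ => ℂ) 2) :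
    Bclm R (Bclm S c) = Bclm (R * S) c := by
  apply lp.ext
  funext i
  simp only [Bclm_apply, Matrix.mul_apply, Finset.sum_mul, Finset.mul_sum]
  rw [Finset.sum_comm]
  exact Finset.sum_congr rfl fun a _ => Finset.sum_congr rfl fun b _ => by ring

lemma Bclm_one (c : lp (fun _ : Fin q × ℤ => ℂ) 2) : Bclm (1 : Matrix (Fin q) (Fin q) ℂ) c = c := by
  apply lp.ext
  funext i
  simp [Bclm_apply, Matrix.one_apply]

/-- The block multiplier equiv for an invertible matrix. -/
def Bequiv (R S : Matrix (Fin q) (Fin q) ℂ) (hRS : R * S = 1) (hSR : S * R = 1) :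
    lp (fun _ : Fin q × ℤ => ℂ) 2 ≃L[ℂ] lp (fun _ : Fin q × ℤ => ℂ) 2 :=
  ContinuousLinearEquiv.equivOfInverse (Bclm R) (Bclm S)
    (fun c => by rw [Bclm_comp, hSR, Bclm_one])
    (fun c => by rw [Bclm_comp, hRS, Bclm_one])

end RieszAux

namespace RieszAux

lemma Bclm_single (R : Matrix (Fin q) (Fin q) ℂ) (k : Fin q) (n : ℤ) :
    Bclm R (lp.single 2 ((k, n) : Fin q × ℤ) (1:ℂ))
      = ∑ j, R j k • lp.single 2 ((j, n) : Fin q × ℤ) (1:ℂ) := by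
  apply lp.ext
  funext i
  obtain ⟨j', m⟩ := i
  rw [lp.coeFn_sum]
  simp only [Bclm_apply, Finset.sum_apply, lp.coeFn_smul, Pi.smul_apply, lp.single_apply,
    smul_eq_mul]
  by_cases hm : m = n
  · subst hm
    rw [Finset.sum_eq_single k, Finset.sum_eq_single j']
    · simp
    · intro b _ hb
      rw [Pi.single_apply, if_neg (by simp [Ne.symm hb] : ¬((j', m) = (b, m)))]
      simp
    · simp
    · intro b _ hb
      rw [Pi.single_apply, if_neg (by simp [hb] : ¬((b, m) = (k, m)))]
      simp
    · simp
  · rw [Finset.sum_eq_zero, Finset.sum_eq_zero]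
    · intro b _
      rw [Pi.single_apply, if_neg (by simp [hm] : ¬((j', m) = (b, n)))]
      simp
    · intro b _
      rw [Pi.single_apply, if_neg (by simp [hm] : ¬((b, m) = (k, n)))]
      simp

end RieszAux

theorem stmt2' {H : Type*} [NormedAddCommGroup H] [InnerProductSpace ℂ H]
    [CompleteSpace H] [TopologicalSpace.SeparableSpace H]
    {p : ℕ} (hp : 1 ≤ p) (x : Fin p × ℤ → H)
    (M : Matrix (Fin p) (Fin p) ℂ) (hM : M.det ≠ 0)
    (z : Fin p × ℤ → H)
    (hz : ∀ j n, z (j, n) = ∑ k, M j k • x (k, n))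
    (hzR : ∃ (e : HilbertBasis (Fin p × ℤ) ℂ H) (T : H ≃L[ℂ] H), ∀ i, z i = T (e i)) :
    ∃ (e : HilbertBasis (Fin p × ℤ) ℂ H) (T : H ≃L[ℂ] H), ∀ i, x i = T (e i) := by
  obtain ⟨e, T, hT⟩ := hzR
  have hMunit : IsUnit M.det := isUnit_iff_ne_zero.mpr hM
  set N : Matrix (Fin p) (Fin p) ℂ := M⁻¹ with hN
  have hNM : N * M = 1 := Matrix.nonsing_inv_mul M hMunit
  have hMN : M * N = 1 := Matrix.mul_nonsing_inv M hMunit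
  -- x (k,n) = ∑ j, N k j • z (j,n)
  have hx : ∀ k n, x (k, n) = ∑ j, N k j • z (j, n) := by
    intro k n
    simp_rw [hz, Finset.smul_sum, smul_smul]
    rw [Finset.sum_comm]
    have : ∀ l : Fin p, ∑ j, (N k j * M j l) • x (l, n) = (if k = l then (1:ℂ) else 0) • x (l, n) := by
      intro l
      rw [← Finset.sum_smul]
      congr 1
      have := congrFun (congrFun hNM k) l
      rw [Matrix.mul_apply] at this
      rw [this, Matrix.one_apply]
    simp_rw [this]
    simp
  -- transpose matrices for the ℓ² operator
  have hRS : N.transpose * M.transpose = 1 := by rw [← Matrix.transpose_mul, hMN, Matrix.transpose_one]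
  have hSR : M.transpose * N.transpose = 1 := by rw [← Matrix.transpose_mul, hNM, Matrix.transpose_one]
  set B := RieszAux.Bequiv N.transpose M.transpose hRS hSR with hB
  set A : H ≃L[ℂ] H :=
    (e.repr.toContinuousLinearEquiv.trans B).trans e.repr.symm.toContinuousLinearEquiv with hA
  refine ⟨e, A.trans T, ?_⟩
  rintro ⟨k, n⟩
  have hAe : A (e (k, n)) = ∑ j, N k j • e (j, n) := by
    have h1 : e.repr (e (k, n)) = lp.single 2 ((k, n) : Fin p × ℤ) (1:ℂ) := e.repr_self (k, n)
    have h2 : B (lp.single 2 ((k, n) : Fin p × ℤ) (1:ℂ))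
        = ∑ j, N k j • lp.single 2 ((j, n) : Fin p × ℤ) (1:ℂ) := by
      have := RieszAux.Bclm_single N.transpose k n
      simpa [hB, RieszAux.Bequiv, Matrix.transpose_apply] using this
    have h3 : ∀ j : Fin p, e.repr.symm (lp.single 2 ((j, n) : Fin p × ℤ) (1:ℂ)) = e (j, n) := by
      intro j
      exact congrArg e.repr.symm (e.repr_self (j, n)) ▸ e.repr.symm_apply_apply _
    simp only [hA, ContinuousLinearEquiv.trans_apply,
      LinearIsometryEquiv.coe_toContinuousLinearEquiv]
    rw [h1, h2, map_sum]
    exact Finset.sum_congr rfl fun j _ => by rw [map_smul, h3 j]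
  have : A.trans T (e (k, n)) = T (A (e (k, n))) := rfl
  rw [this, hAe, map_sum, hx k n]
  exact Finset.sum_congr rfl fun j _ => by rw [map_smul, ← hT (j, n)]


end RieszAuxSection

theorem stmt2 {H : Type*} [NormedAddCommGroup H] [InnerProductSpace ℂ H]
    [CompleteSpace H] [TopologicalSpace.SeparableSpace H]
    {p : ℕ} (hp : 1 ≤ p) (x : Fin p × ℤ → H)
    (M : Matrix (Fin p) (Fin p) ℂ) (hM : M.det ≠ 0)
    (z : Fin p × ℤ → H)
    (hz : ∀ j n, z (j, n) = ∑ k, M j k • x (k, n))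
    (hzR : IsRieszBasis z) :
    IsRieszBasis x :=
  stmt2' hp x M hM z hz hzR
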